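/- Let p ≥ 3, q ≥ 1 be integers and let η be a real number with 0 < η < 1/(7p⁵q). There exists n₀ such that for all n ≥ n₀ the following holds for every n-vertex B_{p,q}-free graph G with e(G) ≥ e(T_{n,p}) − ⌊n/p⌋ + 1: (i) there exists a partition V(G) = V_1 ∪ … ∪ V_p with Σ_{i=1}^p e(G[V_i]) ≤ η³n², and (ii) for every partition V(G) = V_1 ∪ … ∪ V_p with Σ_{i=1}^p e(G[V_i]) ≤ η³n², one has ||V_i| − n/p| ≤ ηn for each i ∈ {1,…,p}. -/

import Mathlib

open SimpleGraph

/-- `G` contains a copy of `H` as a subgraph. -/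
def CopyIn {α β : Type*} (H : SimpleGraph α) (G : SimpleGraph β) : Prop :=
  ∃ f : α → β, Function.Injective f ∧ ∀ ⦃a b⦄, H.Adj a b → G.Adj (f a) (f b)

/-- The complete split graph `B_{p,q} = K_p ∇ q K_1`. -/
def completeSplitGraph (p q : ℕ) : SimpleGraph (Fin (p + q)) where
  Adj i j := i ≠ j ∧ ((i : ℕ) < p ∨ (j : ℕ) < p)
  symm := ⟨fun _ _ h => ⟨h.1.symm, h.2.symm⟩⟩
  loopless := ⟨fun _ h => h.1 rfl⟩

/-- The number of edges of `G` with both endpoints in the part `{v | c v = i}`. -/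
noncomputable def edgesWithin {n p : ℕ} (G : SimpleGraph (Fin n)) (c : Fin n → Fin p) (i : Fin p) : ℕ :=
  Set.ncard {e ∈ G.edgeSet | ∀ v ∈ e, c v = i}

open Finset

section auxiliary
variable {n p : ℕ} (G : SimpleGraph (Fin n)) [DecidableRel G.Adj]

/-- Number of ordered adjacent pairs inside `S`. -/
def N2 (S : Finset (Fin n)) : ℕ := ∑ u ∈ S, #(S.filter (G.Adj u))

lemma N2_eq_card (S : Finset (Fin n)) :
    N2 G S = #((S ×ˢ S).filter fun z => G.Adj z.1 z.2) := by
  rw [card_filter, Finset.sum_product, N2]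
  congr 1; ext u; rw [card_filter]

lemma two_mul_within' (S : Finset (Fin n)) :
    2 * #(G.edgeFinset.filter fun e => ∀ v ∈ e, v ∈ S) = N2 G S := by
  classical
  rw [N2_eq_card]
  rw [Finset.card_eq_sum_card_fiberwise
    (f := fun z : Fin n × Fin n => s(z.1, z.2))
    (t := G.edgeFinset.filter fun e => ∀ v ∈ e, v ∈ S)
    (by
      rintro ⟨a,b⟩ hz
      simp only [mem_filter, mem_product, Finset.mem_coe] at hz ⊢
      refine ⟨mem_edgeFinset.2 hz.2, ?_⟩
      intro v hv
      rcases Sym2.mem_iff.1 hv with rfl | rfl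
      · exact hz.1.1
      · exact hz.1.2)]
  rw [mul_comm, Finset.sum_const_nat]
  intro e he
  simp only [mem_filter, mem_edgeFinset] at he
  obtain ⟨a, b⟩ := e
  have hab : G.Adj a b := (mem_edgeSet G).1 he.1
  have haS : a ∈ S := he.2 a (Sym2.mem_mk_left a b)
  have hbS : b ∈ S := he.2 b (Sym2.mem_mk_right a b)
  have : ((S ×ˢ S).filter fun z => G.Adj z.1 z.2).filter
      (fun z => s(z.1, z.2) = s(a,b)) = {(a,b),(b,a)} := by
    ext ⟨x,y⟩
    simp only [mem_filter, mem_product, mem_insert, mem_singleton, Prod.mk.injEq,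
      Sym2.eq_iff]
    constructor
    · rintro ⟨-, h | h⟩
      · exact Or.inl h
      · exact Or.inr ⟨h.1, h.2⟩
    · rintro (⟨rfl, rfl⟩ | ⟨rfl, rfl⟩)
      · exact ⟨⟨⟨haS, hbS⟩, hab⟩, Or.inl ⟨rfl, rfl⟩⟩
      · exact ⟨⟨⟨hbS, haS⟩, hab.symm⟩, Or.inr ⟨rfl, rfl⟩⟩
  rw [this, card_insert_of_notMem, card_singleton]
  simp only [mem_singleton, Prod.mk.injEq, not_and]
  intro h; exact absurd h (G.ne_of_adj hab)

/-- no copy of B_{k,q} inside S -/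
def NoB (k q : ℕ) (S : Finset (Fin n)) : Prop :=
  ¬ ∃ f : Fin (k + q) → Fin n, Function.Injective f ∧ (∀ a, f a ∈ S) ∧
      ∀ a b, (completeSplitGraph k q).Adj a b → G.Adj (f a) (f b)

lemma noB_base {q : ℕ} (hq : 1 ≤ q) {S : Finset (Fin n)} (h : NoB G 1 q S)
    {x : Fin n} (hx : x ∈ S) : #(S.filter (G.Adj x)) ≤ q - 1 := by
  by_contra hc
  push_neg at hc
  have hqc : q ≤ #(S.filter (G.Adj x)) := by omega
  obtain ⟨T, hTsub, hT⟩ := Finset.exists_subset_card_eq hqc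
  have hmem : ∀ i : Fin q, ((T.orderIsoOfFin hT i : Fin n)) ∈ S.filter (G.Adj x) :=
    fun i => hTsub (T.orderIsoOfFin hT i).2
  apply h
  refine ⟨fun j => if h : (j : ℕ) = 0 then x else
    (T.orderIsoOfFin hT ⟨(j : ℕ) - 1, by omega⟩ : Fin n), ?_, ?_, ?_⟩
  · intro j j' hjj'
    by_cases h1 : (j : ℕ) = 0 <;> by_cases h2 : (j' : ℕ) = 0
    · exact Fin.ext (by omega)
    · exfalso
      simp only [dif_pos h1, dif_neg h2] at hjj'
      have := (mem_filter.1 (hmem ⟨(j' : ℕ) - 1, by omega⟩)).2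
      rw [← hjj'] at this
      exact G.irrefl this
    · exfalso
      simp only [dif_pos h2, dif_neg h1] at hjj'
      have := (mem_filter.1 (hmem ⟨(j : ℕ) - 1, by omega⟩)).2
      rw [hjj'] at this
      exact G.irrefl this
    · simp only [dif_neg h1, dif_neg h2] at hjj'
      have := (T.orderIsoOfFin hT).injective (Subtype.coe_injective hjj')
      have : (j : ℕ) - 1 = (j' : ℕ) - 1 := congrArg Fin.val this
      exact Fin.ext (by omega)
  · intro a
    by_cases h1 : (a : ℕ) = 0
    · simpa [dif_pos h1] using hx
    · simp only [dif_neg h1]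
      exact (mem_filter.1 (hmem _)).1
  · rintro a b ⟨hne, hlt⟩
    have hvne : (a : ℕ) ≠ (b : ℕ) := fun h => hne (Fin.ext h)
    rcases hlt with h0 | h0
    · have ha0 : (a : ℕ) = 0 := by omega
      have hb0 : ¬ (b : ℕ) = 0 := by omega
      simp only [dif_pos ha0, dif_neg hb0]
      exact (mem_filter.1 (hmem _)).2
    · have hb0 : (b : ℕ) = 0 := by omega
      have ha0 : ¬ (a : ℕ) = 0 := by omega
      simp only [dif_pos hb0, dif_neg ha0]
      exact ((mem_filter.1 (hmem _)).2).symm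

lemma noB_step {k q : ℕ} {S : Finset (Fin n)} (h : NoB G (k + 1) q S)
    {x : Fin n} (hx : x ∈ S) : NoB G k q (S.filter (G.Adj x)) := by
  rintro ⟨f, hinj, hmemf, hadj⟩
  have hmem : ∀ a, f a ∈ S.filter (G.Adj x) := hmemf
  apply h
  refine ⟨fun j => if h : (j : ℕ) = 0 then x else
    f ⟨(j : ℕ) - 1, by omega⟩, ?_, ?_, ?_⟩
  · intro j j' hjj'
    by_cases h1 : (j : ℕ) = 0 <;> by_cases h2 : (j' : ℕ) = 0
    · exact Fin.ext (by omega)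
    · exfalso
      simp only [dif_pos h1, dif_neg h2] at hjj'
      have := (mem_filter.1 (hmem ⟨(j' : ℕ) - 1, by omega⟩)).2
      rw [← hjj'] at this
      exact G.irrefl this
    · exfalso
      simp only [dif_pos h2, dif_neg h1] at hjj'
      have := (mem_filter.1 (hmem ⟨(j : ℕ) - 1, by omega⟩)).2
      rw [hjj'] at this
      exact G.irrefl this
    · simp only [dif_neg h1, dif_neg h2] at hjj'
      have := congrArg Fin.val (hinj hjj')
      simp only at this
      exact Fin.ext (by omega)
  · intro a
    by_cases h1 : (a : ℕ) = 0
    · simpa only [dif_pos h1] using hx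
    · simp only [dif_neg h1]
      exact (mem_filter.1 (hmem _)).1
  · rintro a b ⟨hne, hlt⟩
    have hvne : (a : ℕ) ≠ (b : ℕ) := fun h => hne (Fin.ext h)
    by_cases h1 : (a : ℕ) = 0
    · have h2 : ¬ (b : ℕ) = 0 := by omega
      simp only [dif_pos h1, dif_neg h2]
      exact (mem_filter.1 (hmem _)).2
    · by_cases h2 : (b : ℕ) = 0
      · simp only [dif_pos h2, dif_neg h1]
        exact ((mem_filter.1 (hmem _)).2).symm
      · simp only [dif_neg h1, dif_neg h2]
        refine hadj _ _ ⟨?_, ?_⟩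
        · intro hcon
          have := congrArg Fin.val hcon
          simp only at this
          exact hvne (by omega)
        · simp only []
          omega

lemma E_symm (A B : Finset (Fin n)) :
    ∑ u ∈ A, #(B.filter (G.Adj u)) = ∑ u ∈ B, #(A.filter (G.Adj u)) := by
  simp_rw [card_filter]
  rw [Finset.sum_comm]
  refine Finset.sum_congr rfl fun u _ => Finset.sum_congr rfl fun v _ => ?_
  exact if_congr (G.adj_comm v u) rfl rfl


lemma lemA' {q : ℕ} (hq : 1 ≤ q) : ∀ k, 1 ≤ k → ∀ S : Finset (Fin n), NoB G k q S →
    ∃ c : Fin n → Fin k,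
      N2 G S + ((∑ i, N2 G (S.filter fun v => c v = i)) +
        ∑ i, #(S.filter fun v => c v = i) ^ 2) ≤ #S ^ 2 + 2 * (q - 1) * #S := by
  refine Nat.le_induction ?_ ?_
  · -- base case k = 1
    intro S hS
    refine ⟨fun _ => 0, ?_⟩
    have hfilt : ∀ i : Fin 1, (S.filter fun v => (0 : Fin 1) = i) = S :=
      fun i => Finset.filter_true_of_mem (fun v _ => Subsingleton.elim _ _)
    rw [Fin.sum_univ_one, Fin.sum_univ_one, hfilt]
    have hdeg : N2 G S ≤ (q - 1) * #S := by
      rw [N2]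
      calc ∑ u ∈ S, #(S.filter (G.Adj u)) ≤ ∑ _u ∈ S, (q - 1) :=
            Finset.sum_le_sum fun u hu => noB_base G hq hS hu
        _ = #S * (q - 1) := by rw [Finset.sum_const, smul_eq_mul]
        _ = (q - 1) * #S := mul_comm _ _
    nlinarith [hdeg]
  · -- inductive step
    intro k hk IH S hS
    rcases S.eq_empty_or_nonempty with rfl | hSne
    · exact ⟨fun _ => 0, by simp [N2]⟩
    obtain ⟨x, hxS, hxmax⟩ := S.exists_max_image (fun y => #(S.filter (G.Adj y))) hSne
    set B : Finset (Fin n) := S.filter (G.Adj x) with hBdef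
    set A : Finset (Fin n) := S \ B with hAdef
    have hBsub : B ⊆ S := Finset.filter_subset _ _
    have hdisj : Disjoint A B := Finset.sdiff_disjoint
    have hunion : A ∪ B = S := Finset.sdiff_union_of_subset hBsub
    have hcard : #A + #B = #S := Finset.card_sdiff_add_card_eq_card hBsub
    -- split of filtered cards
    have hsplit : ∀ u : Fin n, #(S.filter (G.Adj u)) =
        #(A.filter (G.Adj u)) + #(B.filter (G.Adj u)) := by
      intro u
      rw [← hunion, Finset.filter_union,
        Finset.card_union_of_disjoint (Finset.disjoint_filter_filter hdisj)]
    -- decomposition of N2 S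
    have hN2S : N2 G S = (N2 G A + ∑ u ∈ A, #(B.filter (G.Adj u)))
        + (∑ u ∈ B, #(A.filter (G.Adj u)) + N2 G B) := by
      rw [N2, ← hunion, Finset.sum_union hdisj]
      simp_rw [hunion, hsplit]
      rw [Finset.sum_add_distrib, Finset.sum_add_distrib]
      rw [N2, N2]
    -- degree bound
    have hdegbound : N2 G A + ∑ u ∈ A, #(B.filter (G.Adj u)) ≤ #A * #B := by
      rw [N2, ← Finset.sum_add_distrib]
      calc ∑ u ∈ A, (#(A.filter (G.Adj u)) + #(B.filter (G.Adj u)))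
          = ∑ u ∈ A, #(S.filter (G.Adj u)) := by
            refine Finset.sum_congr rfl fun u _ => (hsplit u).symm
        _ ≤ ∑ _u ∈ A, #B := Finset.sum_le_sum fun u hu =>
            hxmax u ((Finset.sdiff_subset) hu)
        _ = #A * #B := by rw [Finset.sum_const, smul_eq_mul]
    have key1 : N2 G S + N2 G A ≤ 2 * (#A * #B) + N2 G B := by
      rw [hN2S, E_symm G B A]
      omega
    -- apply IH to B
    obtain ⟨cB, hcB⟩ := IH B (noB_step G hS hxS)
    -- build the coloring
    refine ⟨fun v => if v ∈ B then Fin.succ (cB v) else 0, ?_⟩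
    have hpart0 : (S.filter fun v => (if v ∈ B then Fin.succ (cB v) else 0) = 0) = A := by
      ext v
      simp only [mem_filter, hAdef, Finset.mem_sdiff]
      constructor
      · rintro ⟨hvS, hv⟩
        refine ⟨hvS, fun hvB => ?_⟩
        rw [if_pos hvB] at hv
        exact Fin.succ_ne_zero _ hv
      · rintro ⟨hvS, hvB⟩
        exact ⟨hvS, by rw [if_neg hvB]⟩
    have hparts : ∀ i : Fin k,
        (S.filter fun v => (if v ∈ B then Fin.succ (cB v) else 0) = Fin.succ i)
          = B.filter fun v => cB v = i := by
      intro i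
      ext v
      simp only [mem_filter]
      constructor
      · rintro ⟨hvS, hv⟩
        by_cases hvB : v ∈ B
        · rw [if_pos hvB] at hv
          exact ⟨hvB, Fin.succ_injective _ hv⟩
        · rw [if_neg hvB] at hv
          exact absurd hv.symm (Fin.succ_ne_zero i)
      · rintro ⟨hvB, hv⟩
        exact ⟨hBsub hvB, by rw [if_pos hvB, hv]⟩
    rw [Fin.sum_univ_succ, Fin.sum_univ_succ, hpart0]
    simp_rw [hparts]
    have hsq : (#A + #B) ^ 2 = #A ^ 2 + 2 * (#A * #B) + #B ^ 2 := by ring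
    have hBleS : #B ≤ #S := Finset.card_le_card hBsub
    rw [← hcard, hsq]
    nlinarith [key1, hcB, hBleS]

/-- complete multipartite graph from a coloring -/
def Kc (c : Fin n → Fin p) : SimpleGraph (Fin n) where
  Adj u v := c u ≠ c v
  symm := ⟨fun _ _ h => Ne.symm h⟩
  loopless := ⟨fun _ h => h rfl⟩

instance (c : Fin n → Fin p) : DecidableRel (Kc c).Adj := by
  dsimp only [Kc]; infer_instance

lemma Kc_cliqueFree' (c : Fin n → Fin p) : (Kc c).CliqueFree (p + 1) := by
  intro t ht
  have hinj : Set.InjOn c t := by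
    intro a ha b hb hab
    by_contra hne
    exact (ht.1 ha hb hne) hab
  have := Finset.card_le_card_of_injOn c (fun a _ => Finset.mem_univ (c a)) hinj
  rw [ht.2] at this
  simp only [Finset.card_univ, Fintype.card_fin] at this
  omega

lemma sum_classes (c : Fin n → Fin p) :
    ∑ u : Fin n, #(univ.filter fun v => c v = c u)
      = ∑ i, #(univ.filter fun v => c v = i) ^ 2 := by
  rw [← Finset.sum_fiberwise univ c (fun u => #(univ.filter fun v => c v = c u))]
  refine Finset.sum_congr rfl fun i _ => ?_
  rw [sq]
  have : ∀ u ∈ univ.filter fun u => c u = i,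
      #(univ.filter fun v => c v = c u) = #(univ.filter fun v => c v = i) := by
    intro u hu
    rw [(Finset.mem_filter.1 hu).2]
  rw [Finset.sum_congr rfl this, Finset.sum_const, smul_eq_mul]

lemma Kc_N2' (c : Fin n → Fin p) :
    N2 (Kc c) univ + ∑ i, #(univ.filter fun v => c v = i) ^ 2 = n ^ 2 := by
  rw [← sum_classes c, N2, ← Finset.sum_add_distrib]
  have : ∀ u : Fin n, #(univ.filter fun v => (Kc c).Adj u v)
      + #(univ.filter fun v => c v = c u) = n := by
    intro u
    have h1 : (univ.filter fun v => (Kc c).Adj u v)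
        = univ.filter fun v => ¬ c v = c u := by
      refine Finset.filter_congr fun v _ => ?_
      constructor
      · exact fun h hc => h hc.symm
      · exact fun h hc => h hc.symm
    rw [h1, add_comm, Finset.card_filter_add_card_filter_not]
    simp
  rw [Finset.sum_congr rfl fun u _ => this u, Finset.sum_const, Finset.card_univ]
  simp [sq]

lemma N2_le_cross_add_within' (c : Fin n → Fin p) :
    N2 G univ ≤ N2 (Kc c) univ + ∑ i, N2 G (univ.filter fun v => c v = i) := by
  have key : ∀ u : Fin n, #(univ.filter fun v => G.Adj u v)
      ≤ #(univ.filter fun v => (Kc c).Adj u v)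
        + #(univ.filter fun v => c v = c u ∧ G.Adj u v) := by
    intro u
    refine le_trans (Finset.card_le_card ?_) (Finset.card_union_le _ _)
    intro v hv
    rw [Finset.mem_union, Finset.mem_filter, Finset.mem_filter]
    rw [Finset.mem_filter] at hv
    by_cases hcv : c v = c u
    · exact Or.inr ⟨Finset.mem_univ v, hcv, hv.2⟩
    · exact Or.inl ⟨Finset.mem_univ v, fun h => hcv h.symm⟩
  have hgroup : ∑ u : Fin n, #(univ.filter fun v => c v = c u ∧ G.Adj u v)
      = ∑ i, N2 G (univ.filter fun v => c v = i) := by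
    rw [← Finset.sum_fiberwise univ c
      (fun u => #(univ.filter fun v => c v = c u ∧ G.Adj u v))]
    refine Finset.sum_congr rfl fun i _ => ?_
    rw [N2]
    refine Finset.sum_congr rfl fun u hu => ?_
    have hcu : c u = i := (Finset.mem_filter.1 hu).2
    rw [Finset.filter_filter]
    congr 1
    refine Finset.filter_congr fun v _ => ?_
    rw [hcu]
  calc N2 G univ ≤ ∑ u : Fin n, (#(univ.filter fun v => (Kc c).Adj u v)
        + #(univ.filter fun v => c v = c u ∧ G.Adj u v)) :=
        Finset.sum_le_sum fun u _ => key u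
    _ = N2 (Kc c) univ + ∑ i, N2 G (univ.filter fun v => c v = i) := by
        rw [Finset.sum_add_distrib, hgroup, N2]

-- edge count conversions
lemma ncard_edgeSet : G.edgeSet.ncard = #G.edgeFinset := by
  rw [← coe_edgeFinset, Set.ncard_coe_finset]

lemma two_mul_edges : 2 * #G.edgeFinset = N2 G univ := by
  have h := two_mul_within' G (univ : Finset (Fin n))
  rwa [Finset.filter_true_of_mem (fun e _ => fun v _ => Finset.mem_univ v)] at h

lemma edgesWithin_card (c : Fin n → Fin p) (i : Fin p) :
    edgesWithin G c i = #(G.edgeFinset.filter fun e => ∀ v ∈ e, c v = i) := by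
  rw [edgesWithin]
  have hset : {e ∈ G.edgeSet | ∀ v ∈ e, c v = i}
      = ↑(G.edgeFinset.filter fun e => ∀ v ∈ e, c v = i) := by
    ext e
    simp [Set.mem_setOf_eq, Finset.mem_coe, Finset.mem_filter, mem_edgeFinset]
  rw [hset, Set.ncard_coe_finset]

lemma two_mul_edgesWithin (c : Fin n → Fin p) (i : Fin p) :
    2 * edgesWithin G c i = N2 G (univ.filter fun v => c v = i) := by
  have h := two_mul_within' G (univ.filter fun v => c v = i)
  have heq : (G.edgeFinset.filter fun e => ∀ v ∈ e, v ∈ univ.filter fun v => c v = i)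
      = G.edgeFinset.filter fun e => ∀ v ∈ e, c v = i := by
    refine Finset.filter_congr fun e _ => ?_
    constructor
    · intro h v hv
      simpa using h v hv
    · intro h v hv
      simpa using h v hv
  rw [heq] at h
  rw [edgesWithin_card, h]

lemma sum_class_card (c : Fin n → Fin p) :
    ∑ i, #(univ.filter fun v => c v = i) = n := by
  rw [← Finset.card_eq_sum_card_fiberwise (fun x _ => Finset.mem_univ (c x))]
  simp

-- Turán graph as Kc
def cT (hp0 : 0 < p) : Fin n → Fin p := fun v => ⟨(v : ℕ) % p, Nat.mod_lt _ hp0⟩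

lemma turan_eq_Kc (hp0 : 0 < p) : turanGraph n p = Kc (cT hp0) := by
  ext v w
  show (v : ℕ) % p ≠ (w : ℕ) % p ↔ cT hp0 v ≠ cT hp0 w
  rw [not_iff_not]
  constructor
  · intro h; exact Fin.ext h
  · intro h; exact congrArg Fin.val h

lemma class_card_le (hp0 : 0 < p) (i : Fin p) :
    #(univ.filter fun v : Fin n => cT hp0 v = i) ≤ n / p + 1 := by
  have key : #(univ.filter fun v : Fin n => cT hp0 v = i) ≤ #(Finset.range (n / p + 1)) := by
    refine Finset.card_le_card_of_injOn (fun v => (v : ℕ) / p) (fun v _ => ?_) ?_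
    · exact Finset.mem_range.2 (Nat.lt_succ_of_le (Nat.div_le_div_right v.isLt.le))
    · intro u hu v hv huv
      simp only [Finset.coe_filter, Set.mem_setOf_eq] at hu hv
      have hu' : (u : ℕ) % p = (i : ℕ) := congrArg Fin.val hu.2
      have hv' : (v : ℕ) % p = (i : ℕ) := congrArg Fin.val hv.2
      have h1 := Nat.div_add_mod (u : ℕ) p
      have h2 := Nat.div_add_mod (v : ℕ) p
      have hdiv : (u : ℕ) / p = (v : ℕ) / p := by simpa using huv
      refine Fin.ext ?_
      rw [← h1, ← h2, hdiv, hu', hv']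
  simpa using key
end auxiliary

set_option maxHeartbeats 2000000 in
theorem stmt11 (p q : ℕ) (hp : 3 ≤ p) (hq : 1 ≤ q) (η : ℝ) (hη0 : 0 < η)
    (hη : η < 1 / (7 * (p : ℝ) ^ 5 * q)) :
    ∃ n₀ : ℕ, ∀ n ≥ n₀, ∀ G : SimpleGraph (Fin n),
      ¬ CopyIn (completeSplitGraph p q) G →
      (turanGraph n p).edgeSet.ncard + 1 ≤ G.edgeSet.ncard + n / p →
      (∃ c : Fin n → Fin p, (∑ i, (edgesWithin G c i : ℝ)) ≤ η ^ 3 * n ^ 2) ∧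
      (∀ c : Fin n → Fin p, (∑ i, (edgesWithin G c i : ℝ)) ≤ η ^ 3 * n ^ 2 →
        ∀ i : Fin p, |({v | c v = i}.ncard : ℝ) - (n : ℝ) / p| ≤ η * n) := by
  have hp0 : 0 < p := by omega
  have hpR : (3:ℝ) ≤ p := by exact_mod_cast hp
  have hqR : (1:ℝ) ≤ q := by exact_mod_cast hq
  have hp5 : (243:ℝ) ≤ (p:ℝ)^5 := by
    calc (243:ℝ) = 3^5 := by norm_num
      _ ≤ (p:ℝ)^5 := pow_le_pow_left₀ (by norm_num) hpR 5
  have hden : (2:ℝ) ≤ 7*(p:ℝ)^5*q := by nlinarith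
  have hhalf : η < 1/2 :=
    lt_of_lt_of_le hη (one_div_le_one_div_of_le (by norm_num) hden)
  have hη3 : (0:ℝ) < η^3 := by positivity
  have hη2 : (0:ℝ) < η^2*(1-2*η) := by
    apply mul_pos (by positivity); linarith
  refine ⟨max (⌈(q:ℝ)/η^3⌉₊ + 1) (⌈3/(η^2*(1-2*η))⌉₊ + 1), fun n hn G hfree hedge => ?_⟩
  classical
  letI : DecidableRel G.Adj := Classical.decRel _
  have hnq : (q:ℝ)/η^3 ≤ n :=
    Nat.ceil_le.mp (le_trans (le_trans (Nat.le_succ _) (le_max_left _ _)) hn)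
  have hn3 : 3/(η^2*(1-2*η)) ≤ n :=
    Nat.ceil_le.mp (le_trans (le_trans (Nat.le_succ _) (le_max_right _ _)) hn)
  have hnpos : 0 < n :=
    lt_of_lt_of_le (Nat.lt_of_lt_of_le (Nat.zero_lt_succ _) (le_max_left _ _)) hn
  have hnR : (0:ℝ) ≤ n := Nat.cast_nonneg n
  -- no B_{p,q} inside univ
  have hNoB : NoB G p q univ := by
    rintro ⟨f, h1, h2, h3⟩
    exact hfree ⟨f, h1, fun a b hab => h3 a b hab⟩
  obtain ⟨c₀, hc₀⟩ := lemA' G hq p (by omega) univ hNoB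
  rw [Finset.card_univ, Fintype.card_fin] at hc₀
  have hTmax := isTuranMaximal_of_iso (Iso.refl (G := turanGraph n p)) hp0
  rw [ncard_edgeSet, ncard_edgeSet] at hedge
  have hcross : ∀ c : Fin n → Fin p, N2 (Kc c) univ ≤ 2 * #(turanGraph n p).edgeFinset := by
    intro c
    rw [← two_mul_edges (Kc c)]
    exact Nat.mul_le_mul_left 2 (hTmax.2 (Kc_cliqueFree' c))
  have hqn : (q - 1) * n + n = q * n := by
    cases q with
    | zero => omega
    | succ q' => simp [Nat.succ_sub_one, Nat.succ_mul]
  have h5gen : ∀ c : Fin n → Fin p,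
      ∑ j, N2 G (univ.filter fun v => c v = j) = 2 * ∑ j, edgesWithin G c j := by
    intro c
    rw [Finset.mul_sum]
    exact Finset.sum_congr rfl fun j _ => (two_mul_edgesWithin G c j).symm
  -- ℕ bound for part (i)
  have main1 : ∑ i, edgesWithin G c₀ i ≤ q * n := by
    have h2 := Kc_N2' c₀
    have h3 := two_mul_edges G
    have h4 := hcross c₀
    have h5 := h5gen c₀
    have hnp : n / p ≤ n := Nat.div_le_self n p
    linarith
  constructor
  · refine ⟨c₀, ?_⟩
    have hcast : (∑ i, (edgesWithin G c₀ i : ℝ)) = ((∑ i, edgesWithin G c₀ i : ℕ) : ℝ) := by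
      push_cast; rfl
    rw [hcast]
    have h1 : ((∑ i, edgesWithin G c₀ i : ℕ) : ℝ) ≤ ((q*n : ℕ) : ℝ) := Nat.cast_le.2 main1
    have h2 : (q:ℝ) ≤ η^3 * n := by
      rw [div_le_iff₀ hη3] at hnq; linarith [hnq]
    have h3 : (q:ℝ)*n ≤ η^3*n^2 := by nlinarith
    push_cast at h1
    linarith
  · intro c hc i
    have hub : N2 G univ + ∑ j, #(univ.filter fun v => c v = j)^2
        ≤ n^2 + 2 * ∑ j, edgesWithin G c j := by
      have h1 := N2_le_cross_add_within' G c
      have h2 := Kc_N2' c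
      have h5 := h5gen c
      linarith
    have hlowT : n^2 ≤ 2*#(turanGraph n p).edgeFinset + (n/p + 1)*n := by
      have h2 := Kc_N2' (cT (n := n) hp0)
      have hTK : #(turanGraph n p).edgeFinset = #(Kc (cT (n := n) hp0)).edgeFinset := by
        rw [← ncard_edgeSet, ← ncard_edgeSet, turan_eq_Kc hp0]
      have h3 := two_mul_edges (Kc (cT (n := n) hp0))
      have hmsum : ∑ j, #(univ.filter fun v => cT (n := n) hp0 v = j)^2 ≤ (n/p + 1)*n := by
        calc ∑ j, #(univ.filter fun v => cT (n := n) hp0 v = j)^2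
            ≤ ∑ j, (n/p + 1) * #(univ.filter fun v => cT (n := n) hp0 v = j) :=
              Finset.sum_le_sum fun j _ => by
                rw [sq]; exact Nat.mul_le_mul_right _ (class_card_le hp0 j)
          _ = (n/p + 1)*n := by rw [← Finset.mul_sum, sum_class_card]
      omega
    -- real versions
    set s : Fin p → ℝ := fun j => (#(univ.filter fun v => c v = j) : ℝ) with hs
    have hsum : ∑ j, s j = n := by
      rw [hs, ← Nat.cast_sum]
      exact_mod_cast congrArg (Nat.cast : ℕ → ℝ) (sum_class_card c)
    have hubR : (2*#G.edgeFinset : ℝ) + ∑ j, s j^2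
        ≤ (n:ℝ)^2 + 2 * ∑ j, (edgesWithin G c j : ℝ) := by
      have h0 := two_mul_edges G
      have hub' : 2*#G.edgeFinset + ∑ j, #(univ.filter fun v => c v = j)^2
          ≤ n^2 + 2 * ∑ j, edgesWithin G c j := by omega
      have hcast := (Nat.cast_le (α := ℝ)).2 hub'
      push_cast at hcast
      simpa only [hs] using hcast
    have hlowTR : ((n:ℝ))^2 ≤ 2*(#(turanGraph n p).edgeFinset : ℝ) + (((n/p : ℕ):ℝ) + 1)*n := by
      have hcast := (Nat.cast_le (α := ℝ)).2 hlowT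
      push_cast at hcast
      convert hcast using 2
    have hedgeR : (#(turanGraph n p).edgeFinset : ℝ) + 1 ≤ (#G.edgeFinset : ℝ) + ((n/p : ℕ):ℝ) := by
      have hcast := (Nat.cast_le (α := ℝ)).2 hedge
      push_cast at hcast
      convert hcast using 2
    have hcastdiv : ((n/p : ℕ):ℝ) ≤ (n:ℝ)/p := Nat.cast_div_le
    have hdivn : (n:ℝ)/p ≤ n := by
      rw [div_le_iff₀ (by linarith : (0:ℝ) < p)]; nlinarith
    have hsumsq : ∑ j, s j^2 ≤ (n:ℝ)^2/p + 2*η^3*n^2 + 3*n := by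
      have e1 : (((n/p : ℕ):ℝ) + 1)*n ≤ ((n:ℝ)/p + 1)*n := by
        apply mul_le_mul_of_nonneg_right _ hnR; linarith
      have e2 : ((n:ℝ)/p + 1)*n = (n:ℝ)^2/p + n := by ring
      linarith
    have hident : ∑ j, (s j - (n:ℝ)/p)^2 = ∑ j, s j^2 - (n:ℝ)^2/p := by
      have hexp : ∀ j : Fin p, (s j - (n:ℝ)/p)^2
          = s j^2 - 2*((n:ℝ)/p)*s j + ((n:ℝ)/p)^2 := fun j => by ring
      rw [Finset.sum_congr rfl fun j _ => hexp j]
      rw [Finset.sum_add_distrib, Finset.sum_sub_distrib, ← Finset.mul_sum, hsum,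
        Finset.sum_const, Finset.card_univ, Fintype.card_fin, nsmul_eq_mul]
      have hpne : (p:ℝ) ≠ 0 := by linarith
      field_simp
      ring
    have hsmall : ∑ j, (s j - (n:ℝ)/p)^2 ≤ η^2*n^2 := by
      have h3n : 3*(n:ℝ) ≤ η^2*(1-2*η)*n^2 := by
        rw [div_le_iff₀ hη2] at hn3
        nlinarith
      have hcube : 2*η^3*(n:ℝ)^2 = 2*η*(η^2*n^2) := by ring
      nlinarith [hident, hsumsq, h3n]
    have hsingle : (s i - (n:ℝ)/p)^2 ≤ η^2*n^2 :=
      le_trans (Finset.single_le_sum (f := fun j => (s j - (n:ℝ)/p)^2) (fun j _ => sq_nonneg _) (Finset.mem_univ i)) hsmall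
    have habs : |s i - (n:ℝ)/p| ≤ η*n := by
      apply abs_le_of_sq_le_sq _ (by positivity)
      calc (s i - (n:ℝ)/p)^2 ≤ η^2*n^2 := hsingle
        _ = (η*n)^2 := by ring
    have hncard : ({v | c v = i}.ncard : ℝ) = s i := by
      rw [hs]
      congr 1
      have : {v | c v = i} = ↑(univ.filter fun v => c v = i) := by ext v; simp
      rw [this, Set.ncard_coe_finset]
    rw [hncard]
    exact habs
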